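/- Let H = (V, ℰ) be an acyclic hypergraph and let E_i and E_j be two distinct hyperedges of H. Then H has a join tree containing the edge E_iE_j if and only if every join tree T of H has an edge E_i'E_j' on the path from E_i to E_j in T such that E_i ∩ E_j = E_i' ∩ E_j'. -/

import Mathlib

open SimpleGraph

/-- `T` is a join tree for the hypergraph whose hyperedge family is `E` (indexed by `ι`):
`T` is a tree on the hyperedges and, for every vertex `v`, the hyperedges containing `v`
induce a connected (nonempty sets being preconnected) subgraph of `T`. -/
def IsJoinTree {V ι : Type*} (E : ι → Finset V) (T : SimpleGraph ι) : Prop :=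
  T.IsTree ∧ ∀ v : V, (T.induce {i | v ∈ E i}).Preconnected

/-- A hypergraph is acyclic if it admits a join tree. -/
def IsAcyclicHG {V ι : Type*} (E : ι → Finset V) : Prop :=
  ∃ T : SimpleGraph ι, IsJoinTree E T

section Aux

variable {ι : Type*}


lemma walk_in_set {T : SimpleGraph ι} {S : Set ι}
    (h : (T.induce S).Preconnected) {x y : ι} (hx : x ∈ S) (hy : y ∈ S) :
    ∃ w : T.Walk x y, ∀ z ∈ w.support, z ∈ S := by
  obtain ⟨w₀⟩ := h ⟨x, hx⟩ ⟨y, hy⟩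
  refine ⟨w₀.map (SimpleGraph.Embedding.induce S).toHom, ?_⟩
  intro z hz
  have hz : z ∈ (w₀.map (SimpleGraph.Embedding.induce S).toHom).support := hz
  rw [Walk.support_map] at hz
  obtain ⟨⟨z', hz'⟩, _, rfl⟩ := List.mem_map.mp hz
  exact hz'

lemma preconnected_of_walks {T : SimpleGraph ι} {S : Set ι}
    (h : ∀ x ∈ S, ∀ y ∈ S, ∃ w : T.Walk x y, ∀ z ∈ w.support, z ∈ S) :
    (T.induce S).Preconnected := by
  have key : ∀ {x y : ι} (w : T.Walk x y), (∀ z ∈ w.support, z ∈ S) →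
      ∀ (hx : x ∈ S) (hy : y ∈ S), (T.induce S).Reachable ⟨x, hx⟩ ⟨y, hy⟩ := by
    intro x y w
    induction w with
    | nil => intro _ hx hy; rfl
    | @cons x c y h' q ih =>
      intro hw hx hy
      have hc : c ∈ S := hw c (by simp [Walk.support_cons])
      have hadj : (T.induce S).Adj ⟨x, hx⟩ ⟨c, hc⟩ := by simpa using h'
      exact hadj.reachable.trans (ih (fun z hz => hw z (by simp [Walk.support_cons, hz])) hc hy)
  rintro ⟨x, hx⟩ ⟨y, hy⟩
  obtain ⟨w, hw⟩ := h x hx y hy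
  exact key w hw hx hy

lemma exists_bad_edge {T G₀ : SimpleGraph ι} :
    ∀ {x y : ι} (w : T.Walk x y), ¬G₀.Reachable x y →
      ∃ a b : ι, s(a, b) ∈ w.edges ∧ ¬G₀.Reachable a b := by
  intro x y w
  induction w with
  | nil => intro h; exact absurd (Reachable.refl _) h
  | @cons x c y h q ih =>
    intro hreach
    by_cases hxc : G₀.Reachable x c
    · have : ¬G₀.Reachable c y := fun hcy => hreach (hxc.trans hcy)
      obtain ⟨a, b, hm, hr⟩ := ih this
      exact ⟨a, b, by simp [hm], hr⟩
    · exact ⟨x, c, by simp, hxc⟩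

lemma path_split {T : SimpleGraph ι} {a b : ι} :
    ∀ {x y : ι} (w : T.Walk x y), w.IsPath → s(a, b) ∈ w.edges →
      ((T.deleteEdges {s(a, b)}).Reachable x a ∧ (T.deleteEdges {s(a, b)}).Reachable b y) ∨
      ((T.deleteEdges {s(a, b)}).Reachable x b ∧ (T.deleteEdges {s(a, b)}).Reachable a y) := by
  intro x y w
  induction w with
  | nil => intro _ he; simp at he
  | @cons x c y h q ih =>
    intro hw he
    by_cases hxc : s(x, c) = s(a, b)
    · have hnd : s(x, c) ∉ q.edges := by
        have := hw.isTrail.edges_nodup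
        rw [Walk.edges_cons] at this
        exact (List.nodup_cons.mp this).1
      have hq : ∀ e ∈ q.edges, e ∉ ({s(a, b)} : Set (Sym2 ι)) := by
        intro e hee
        simp only [Set.mem_singleton_iff]
        rintro rfl
        exact hnd (hxc ▸ hee)
      rcases Sym2.eq_iff.mp hxc with ⟨rfl, rfl⟩ | ⟨rfl, rfl⟩
      · exact Or.inl ⟨Reachable.refl _, ⟨q.toDeleteEdges _ hq⟩⟩
      · exact Or.inr ⟨Reachable.refl _, ⟨q.toDeleteEdges _ hq⟩⟩
    · have he' : s(a, b) ∈ q.edges := by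
        rw [Walk.edges_cons, List.mem_cons] at he
        exact he.resolve_left (fun h' => hxc h'.symm)
      have hadj : (T.deleteEdges {s(a, b)}).Adj x c :=
        deleteEdges_adj.mpr ⟨h, by simpa using hxc⟩
      rcases ih hw.of_cons he' with ⟨h1, h2⟩ | ⟨h1, h2⟩
      · exact Or.inl ⟨hadj.reachable.trans h1, h2⟩
      · exact Or.inr ⟨hadj.reachable.trans h1, h2⟩

lemma replace_walk {T T' : SimpleGraph ι} {a b : ι} {S : Set ι}
    (hle : ∀ x y : ι, T.Adj x y → s(x, y) ≠ s(a, b) → T'.Adj x y)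
    (hr : a ∈ S → b ∈ S → ∃ r : T'.Walk a b, ∀ z ∈ r.support, z ∈ S) :
    ∀ {x y : ι} (w : T.Walk x y), (∀ z ∈ w.support, z ∈ S) →
      ∃ w' : T'.Walk x y, ∀ z ∈ w'.support, z ∈ S := by
  intro x y w
  induction w with
  | nil => intro hw; exact ⟨Walk.nil, hw⟩
  | @cons x c y h q ih =>
    intro hw
    have hx : x ∈ S := hw x (by simp)
    have hc : c ∈ S := hw c (by simp [Walk.support_cons])
    obtain ⟨w', hw'⟩ := ih (fun z hz => hw z (by simp [Walk.support_cons, hz]))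
    by_cases hxc : s(x, c) = s(a, b)
    · rcases Sym2.eq_iff.mp hxc with ⟨rfl, rfl⟩ | ⟨rfl, rfl⟩
      · obtain ⟨r, hrS⟩ := hr hx hc
        refine ⟨r.append w', ?_⟩
        intro z hz
        rcases (Walk.mem_support_append_iff _ _).mp hz with hz | hz
        · exact hrS z hz
        · exact hw' z hz
      · obtain ⟨r, hrS⟩ := hr hc hx
        refine ⟨r.reverse.append w', ?_⟩
        intro z hz
        rcases (Walk.mem_support_append_iff _ _).mp hz with hz | hz
        · exact hrS z (by simpa [Walk.support_reverse] using hz)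
        · exact hw' z hz
    · refine ⟨Walk.cons (hle x c h hxc) w', ?_⟩
      intro z hz
      rcases by simpa [Walk.support_cons] using hz with rfl | hz
      · exact hx
      · exact hw' z hz

lemma construct {V : Type*} [DecidableEq V] (E : ι → Finset V) (T : SimpleGraph ι)
    (hT : IsJoinTree E T) {i j a b : ι} (hij : i ≠ j) (hnadj : ¬T.Adj i j)
    (heq : E a ∩ E b = E i ∩ E j)
    (p : T.Walk i j) (hp : p.IsPath) (hm : s(a, b) ∈ p.edges)
    (h1 : (T.deleteEdges {s(a, b)}).Reachable i a)
    (h2 : (T.deleteEdges {s(a, b)}).Reachable b j) :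
    ∃ T' : SimpleGraph ι, IsJoinTree E T' ∧ T'.Adj i j := by
  classical
  have hab : T.Adj a b := p.adj_of_mem_edges hm
  set G' := T.deleteEdges {s(a, b)} with hG'def
  set T' := G' ⊔ fromEdgeSet {s(i, j)} with hT'def
  have hT'adj : T'.Adj i j := (sup_adj _ _ _ _).mpr (Or.inr ((fromEdgeSet_adj _).mpr ⟨rfl, hij⟩))
  have hle' : ∀ x y : ι, T.Adj x y → s(x, y) ≠ s(a, b) → T'.Adj x y := fun x y h hne =>
    (sup_adj _ _ _ _).mpr (Or.inl (deleteEdges_adj.mpr ⟨h, by simpa using hne⟩))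
  have hG'le : G' ≤ T := deleteEdges_le _
  have hG'T' : G' ≤ T' := le_sup_left
  have habG' : s(a, b) ∉ G'.edgeSet := by
    rw [hG'def, edgeSet_deleteEdges]
    simp
  have hT'edges : ∀ e ∈ T'.edgeSet, e ∈ G'.edgeSet ∨ e = s(i, j) := by
    intro e he
    rw [hT'def, edgeSet_sup] at he
    rcases he with he | he
    · exact Or.inl he
    · rw [edgeSet_fromEdgeSet] at he
      exact Or.inr he.1
  have hmemT' : ∀ e, e ∈ T.edgeSet → e ≠ s(a, b) → e ∈ T'.edgeSet := by
    intro e h hne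
    rw [hT'def, edgeSet_sup]
    exact Or.inl (by rw [hG'def, edgeSet_deleteEdges]; exact ⟨h, by simpa using hne⟩)
  have uniq := hT.1.existsUnique_path
  obtain ⟨w₁⟩ := h1
  obtain ⟨w₂⟩ := h2
  -- connectivity
  have rconn : T'.Walk a b :=
    (w₁.transfer T' (fun e he => edgeSet_mono hG'T' (w₁.edges_subset_edgeSet he))).reverse.append
      (Walk.cons hT'adj
        (w₂.transfer T' (fun e he => edgeSet_mono hG'T' (w₂.edges_subset_edgeSet he))).reverse)
  have hconn : T'.Connected := by
    rw [connected_iff]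
    refine ⟨?_, ⟨i⟩⟩
    intro x y
    obtain ⟨w⟩ := hT.1.isConnected.preconnected x y
    obtain ⟨w', _⟩ := replace_walk (S := (Set.univ : Set ι)) hle'
      (fun _ _ => ⟨rconn, fun z _ => Set.mem_univ z⟩) w (fun z _ => Set.mem_univ z)
    exact ⟨w'⟩
  -- key: no i-j reachability after deleting s(i,j) from T'
  have hbridge : ¬(T' \ fromEdgeSet {s(i, j)}).Reachable i j := by
    rintro ⟨W⟩
    have hWe : ∀ e ∈ W.edges, e ∈ G'.edgeSet := by
      intro e he
      have h1e := W.edges_subset_edgeSet he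
      have h2e : e ∈ T'.edgeSet ∧ e ∉ ({s(i, j)} : Set (Sym2 ι)) := by
        have : T' \ fromEdgeSet {s(i, j)} = T'.deleteEdges {s(i, j)} := rfl
        rw [this, edgeSet_deleteEdges] at h1e
        exact h1e
      rcases hT'edges e h2e.1 with h | h
      · exact h
      · exact absurd (by simpa using h) h2e.2
    have hWt : ∀ e ∈ (W.transfer G' hWe).edges, e ∈ T.edgeSet := by
      intro e he
      rw [Walk.edges_transfer] at he
      exact edgeSet_mono hG'le (hWe e he)
    set q := ((W.transfer G' hWe).transfer T hWt).bypass with hq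
    have hqab : s(a, b) ∉ q.edges := by
      intro hmem
      have := Walk.edges_bypass_subset _ hmem
      rw [Walk.edges_transfer, Walk.edges_transfer] at this
      exact habG' (hWe _ this)
    have hqp : q = p := (uniq i j).unique (Walk.bypass_isPath _) hp
    exact hqab (hqp ▸ hm)
  have hacyc : T'.IsAcyclic := by
    intro u c hc
    by_cases hcij : s(i, j) ∈ c.edges
    · have hb : T'.IsBridge s(i, j) := isBridge_iff.mpr hbridge
      exact hb.notMem_edges_of_isCycle hc hcij
    · have hce : ∀ e ∈ c.edges, e ∈ G'.edgeSet := by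
        intro e he
        rcases hT'edges e (c.edges_subset_edgeSet he) with h | h
        · exact h
        · exact absurd (h ▸ he) hcij
      have hct : ∀ e ∈ (c.transfer G' hce).edges, e ∈ T.edgeSet := by
        intro e he
        rw [Walk.edges_transfer] at he
        exact edgeSet_mono hG'le (hce e he)
      exact hT.1.IsAcyclic _ ((hc.transfer hce).transfer hct)
  -- join tree property
  have hjoin : ∀ v : V, (T'.induce {k | v ∈ E k}).Preconnected := by
    intro v
    set S : Set ι := {k | v ∈ E k} with hSdef
    apply preconnected_of_walks
    intro x hx y hy
    obtain ⟨w, hw⟩ := walk_in_set (hT.2 v) hx hy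
    refine replace_walk hle' ?_ w hw
    intro ha hb
    have hvij : v ∈ E i ∩ E j := heq ▸ Finset.mem_inter.mpr ⟨ha, hb⟩
    have hi : i ∈ S := (Finset.mem_inter.mp hvij).1
    have hj : j ∈ S := (Finset.mem_inter.mp hvij).2
    -- path from i to a within S avoiding s(a,b)
    obtain ⟨u1, hu1⟩ := walk_in_set (hT.2 v) hi ha
    have hw1T : ∀ e ∈ w₁.edges, e ∈ T.edgeSet := fun e he =>
      edgeSet_mono hG'le (w₁.edges_subset_edgeSet he)
    have heq1 : u1.bypass = (w₁.transfer T hw1T).bypass :=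
      (uniq i a).unique (Walk.bypass_isPath _) (Walk.bypass_isPath _)
    have hq1ab : ∀ e ∈ u1.bypass.edges, e ∈ T'.edgeSet := by
      intro e he
      refine hmemT' e (u1.bypass.edges_subset_edgeSet he) ?_
      rintro rfl
      rw [heq1] at he
      have := Walk.edges_bypass_subset _ he
      rw [Walk.edges_transfer] at this
      exact habG' (w₁.edges_subset_edgeSet this)
    obtain ⟨u2, hu2⟩ := walk_in_set (hT.2 v) hb hj
    have hw2T : ∀ e ∈ w₂.edges, e ∈ T.edgeSet := fun e he =>
      edgeSet_mono hG'le (w₂.edges_subset_edgeSet he)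
    have heq2 : u2.bypass = (w₂.transfer T hw2T).bypass :=
      (uniq b j).unique (Walk.bypass_isPath _) (Walk.bypass_isPath _)
    have hq2ab : ∀ e ∈ u2.bypass.edges, e ∈ T'.edgeSet := by
      intro e he
      refine hmemT' e (u2.bypass.edges_subset_edgeSet he) ?_
      rintro rfl
      rw [heq2] at he
      have := Walk.edges_bypass_subset _ he
      rw [Walk.edges_transfer] at this
      exact habG' (w₂.edges_subset_edgeSet this)
    refine ⟨(u1.bypass.transfer T' hq1ab).reverse.append
      (Walk.cons hT'adj (u2.bypass.transfer T' hq2ab).reverse), ?_⟩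
    intro z hz
    rcases (Walk.mem_support_append_iff _ _).mp hz with hz | hz
    · rw [Walk.support_reverse, List.mem_reverse, Walk.support_transfer] at hz
      exact hu1 z (u1.support_bypass_subset hz)
    · rcases by simpa [Walk.support_cons, Walk.support_reverse, Walk.support_transfer] using hz
        with rfl | hz
      · exact hi
      · exact hu2 z (u2.support_bypass_subset hz)
  exact ⟨T', ⟨⟨hconn, hacyc⟩, hjoin⟩, hT'adj⟩

end Aux

/-- For two distinct hyperedges `E_i, E_j` of an acyclic hypergraph `H`:
`H` has a join tree containing the edge `E_iE_j` iff every join tree `T` of `H` has an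
edge `E_i'E_j'` on the path from `E_i` to `E_j` in `T` with `E_i ∩ E_j = E_i' ∩ E_j'`. -/
theorem stmt4 {V ι : Type*} [Fintype V] [Fintype ι] [DecidableEq V]
    (E : ι → Finset V)
    (hne : ∀ i, (E i).Nonempty) (hcov : ∀ v, ∃ i, v ∈ E i)
    (hacyclic : IsAcyclicHG E)
    (i j : ι) (hij : i ≠ j) :
    (∃ T : SimpleGraph ι, IsJoinTree E T ∧ T.Adj i j) ↔
      ∀ T : SimpleGraph ι, IsJoinTree E T →
        ∀ p : T.Walk i j, p.IsPath →
          ∃ a b : ι, s(a, b) ∈ p.edges ∧ E a ∩ E b = E i ∩ E j := by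
  classical
  constructor
  · rintro ⟨T₀, hT₀, hadj⟩ T hT p hp
    have hbridge : T₀.IsBridge s(i, j) :=
      isAcyclic_iff_forall_adj_isBridge.mp hT₀.1.2 hadj
    have hnr : ¬(T₀.deleteEdges {s(i, j)}).Reachable i j := isBridge_iff.mp hbridge
    obtain ⟨a, b, hm, hr⟩ := exists_bad_edge p hnr
    refine ⟨a, b, hm, ?_⟩
    apply Finset.Subset.antisymm
    · intro v hv
      have hva : v ∈ E a := (Finset.mem_inter.mp hv).1
      have hvb : v ∈ E b := (Finset.mem_inter.mp hv).2
      obtain ⟨w, hw⟩ := walk_in_set (hT₀.2 v) (show a ∈ {k | v ∈ E k} from hva) hvb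
      have hij_mem : s(i, j) ∈ w.edges := by
        by_contra hno
        refine hr ⟨w.toDeleteEdges {s(i, j)} ?_⟩
        intro e he
        simp only [Set.mem_singleton_iff]
        rintro rfl
        exact hno he
      have hiw : i ∈ w.support := w.fst_mem_support_of_mem_edges hij_mem
      have hjw : j ∈ w.support := w.snd_mem_support_of_mem_edges hij_mem
      exact Finset.mem_inter.mpr ⟨hw i hiw, hw j hjw⟩
    · intro v hv
      have hvi : v ∈ E i := (Finset.mem_inter.mp hv).1
      have hvj : v ∈ E j := (Finset.mem_inter.mp hv).2
      obtain ⟨w, hw⟩ := walk_in_set (hT.2 v) (show i ∈ {k | v ∈ E k} from hvi) hvj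
      have hbp : w.bypass = p := (hT.1.existsUnique_path i j).unique (Walk.bypass_isPath _) hp
      have hap : a ∈ p.support := p.fst_mem_support_of_mem_edges hm
      have hbp' : b ∈ p.support := p.snd_mem_support_of_mem_edges hm
      rw [← hbp] at hap hbp'
      exact Finset.mem_inter.mpr ⟨hw a (w.support_bypass_subset hap),
        hw b (w.support_bypass_subset hbp')⟩
  · intro hall
    obtain ⟨T, hT⟩ := hacyclic
    by_cases hadj : T.Adj i j
    · exact ⟨T, hT, hadj⟩
    obtain ⟨w⟩ := hT.1.1.preconnected i j
    obtain ⟨a, b, hm, heq⟩ := hall T hT w.bypass (Walk.bypass_isPath w)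
    rcases path_split w.bypass (Walk.bypass_isPath w) hm with ⟨h1, h2⟩ | ⟨h1, h2⟩
    · exact construct E T hT hij hadj heq w.bypass (Walk.bypass_isPath w) hm h1 h2
    · have hm' : s(b, a) ∈ w.bypass.edges := Sym2.eq_swap ▸ hm
      have heq' : E b ∩ E a = E i ∩ E j := by rwa [Finset.inter_comm]
      have hsw : ({s(a, b)} : Set (Sym2 ι)) = {s(b, a)} := by rw [Sym2.eq_swap]
      exact construct E T hT hij hadj heq' w.bypass (Walk.bypass_isPath w) hm'
        (hsw ▸ h1) (hsw ▸ h2)
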